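/- For density matrices ρ and σ on a finite-dimensional Hilbert space with σ positive definite, the relative entropy satisfies D(ρ‖σ) ≥ −2 ln Tr[ρ^{1/2} σ^{1/2}]. -/

import Mathlib

open Matrix Kronecker
open scoped ComplexOrder

/-- The positive semidefinite square root, as `Matrix.PosSemidef.sqrt` was defined in older Mathlib. -/
noncomputable def Matrix.PosSemidef.sqrt {n : Type*} [Fintype n] [DecidableEq n] {𝕜 : Type*} [RCLike 𝕜]
    {A : Matrix n n 𝕜} (hA : A.PosSemidef) : Matrix n n 𝕜 :=
  hA.1.eigenvectorUnitary.1 * diagonal ((↑) ∘ (√·) ∘ hA.1.eigenvalues) *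
    (star hA.1.eigenvectorUnitary : Matrix n n 𝕜)

noncomputable def mexp {n : Type*} [Fintype n] [DecidableEq n] (A : Matrix n n ℂ) : Matrix n n ℂ :=
  if h : A.IsHermitian then h.cfc Real.exp else 0

noncomputable def mlog {n : Type*} [Fintype n] [DecidableEq n] (A : Matrix n n ℂ) : Matrix n n ℂ :=
  if h : A.IsHermitian then h.cfc Real.log else 0

open scoped Classical in
noncomputable def msqrt {n : Type*} [Fintype n] [DecidableEq n] (A : Matrix n n ℂ) : Matrix n n ℂ :=
  if h : A.PosSemidef then h.sqrt else 0

noncomputable def entropy {n : Type*} [Fintype n] [DecidableEq n] (ρ : Matrix n n ℂ) : ℝ :=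
  -((ρ * mlog ρ).trace.re)

noncomputable def relEnt {n : Type*} [Fintype n] [DecidableEq n] (ρ σ : Matrix n n ℂ) : ℝ :=
  ((ρ * (mlog ρ - mlog σ)).trace.re)

noncomputable def ptrace₂ {n m : Type*} [Fintype n] [Fintype m]
    (ρ : Matrix (n × m) (n × m) ℂ) : Matrix n n ℂ :=
  Matrix.of fun i j => ∑ k, ρ (i, k) (j, k)

noncomputable def ptrace₁ {n m : Type*} [Fintype n] [Fintype m]
    (ρ : Matrix (n × m) (n × m) ℂ) : Matrix m m ℂ :=
  Matrix.of fun i j => ∑ k, ρ (k, i) (k, j)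

noncomputable def traceNorm {n : Type*} [Fintype n] [DecidableEq n] (A : Matrix n n ℂ) : ℝ :=
  ((Matrix.posSemidef_conjTranspose_mul_self A).sqrt.trace).re

lemma trace_diag_conj {d : Type*} [Fintype d] [DecidableEq d]
    (U W : Matrix d d ℂ) (f g : d → ℂ) :
    (U * diagonal f * star U * (W * diagonal g * star W)).trace
      = ∑ i, ∑ j, f i * g j * ((star U * W) i j * (star W * U) j i) := by
  have h1 : U * diagonal f * star U * (W * diagonal g * star W)
      = U * (diagonal f * (star U * W * diagonal g * star W)) := by
    simp only [Matrix.mul_assoc]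
  rw [h1, Matrix.trace_mul_comm]
  have h2 : diagonal f * (star U * W * diagonal g * star W) * U
      = diagonal f * (star U * W * diagonal g * (star W * U)) := by
    simp only [Matrix.mul_assoc]
  rw [h2]
  simp only [Matrix.trace, Matrix.diag_apply, Matrix.diagonal_mul]
  apply Finset.sum_congr rfl; intro i _
  rw [show (star U * W * diagonal g * (star W * U)) i i
      = ∑ j, (star U * W) i j * g j * (star W * U) j i by
    simp only [Matrix.mul_apply (M := star U * W * diagonal g), Matrix.mul_diagonal]]
  rw [Finset.mul_sum]
  apply Finset.sum_congr rfl; intro j _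
  ring

lemma real_key {d : Type*} [Fintype d] (p q : d → ℝ) (c : d → d → ℝ)
    (hp : ∀ i, 0 < p i) (hq : ∀ j, 0 < q j) (hc : ∀ i j, 0 ≤ c i j)
    (hrow : ∀ i, ∑ j, c i j = 1) (hps : ∑ i, p i = 1) :
    (∑ i, p i * Real.log (p i)) - ∑ i, ∑ j, p i * Real.log (q j) * c i j
      ≥ -2 * Real.log (∑ i, ∑ j, Real.sqrt (p i) * Real.sqrt (q j) * c i j) := by
  classical
  set w : d × d → ℝ := fun ij => p ij.1 * c ij.1 ij.2 with hw
  set x : d × d → ℝ := fun ij => Real.sqrt (q ij.2) / Real.sqrt (p ij.1) with hx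
  have hw0 : ∀ ij : d × d, 0 ≤ w ij := fun ij => mul_nonneg (hp _).le (hc _ _)
  have hw1 : ∑ ij : d × d, w ij = 1 := by
    rw [Fintype.sum_prod_type]
    simp only [hw, ← Finset.mul_sum, hrow, mul_one, hps]
  have hxpos : ∀ ij : d × d, x ij ∈ Set.Ioi (0:ℝ) := fun ij =>
    div_pos (Real.sqrt_pos.mpr (hq _)) (Real.sqrt_pos.mpr (hp _))
  have jensen := (strictConcaveOn_log_Ioi.concaveOn).le_map_sum
    (t := Finset.univ) (w := w) (p := x) (fun i _ => hw0 i) hw1 (fun i _ => hxpos i)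
  have hsum_wx : ∑ ij : d × d, w ij • x ij
      = ∑ i, ∑ j, Real.sqrt (p i) * Real.sqrt (q j) * c i j := by
    rw [Fintype.sum_prod_type]
    refine Finset.sum_congr rfl fun i _ => Finset.sum_congr rfl fun j _ => ?_
    have h1 : p i * (Real.sqrt (q j) / Real.sqrt (p i))
        = Real.sqrt (p i) * Real.sqrt (q j) := by
      rw [show p i * (Real.sqrt (q j) / Real.sqrt (p i))
          = (p i / Real.sqrt (p i)) * Real.sqrt (q j) by ring, Real.div_sqrt]
    simp only [hw, hx, smul_eq_mul]
    calc p i * c i j * (Real.sqrt (q j) / Real.sqrt (p i))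
        = (p i * (Real.sqrt (q j) / Real.sqrt (p i))) * c i j := by ring
      _ = Real.sqrt (p i) * Real.sqrt (q j) * c i j := by rw [h1]
  have hlogx : ∀ ij : d × d, Real.log (x ij)
      = (Real.log (q ij.2) - Real.log (p ij.1)) / 2 := by
    intro ij
    simp only [hx]
    rw [Real.log_div (ne_of_gt (Real.sqrt_pos.mpr (hq _))) (ne_of_gt (Real.sqrt_pos.mpr (hp _))),
      Real.log_sqrt (hq _).le, Real.log_sqrt (hp _).le]
    ring
  have hL : (∑ i, p i * Real.log (p i)) - ∑ i, ∑ j, p i * Real.log (q j) * c i j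
      = ∑ ij : d × d, w ij * (Real.log (p ij.1) - Real.log (q ij.2)) := by
    have h1 : ∑ i, p i * Real.log (p i) = ∑ i, ∑ j, p i * Real.log (p i) * c i j := by
      refine Finset.sum_congr rfl fun i _ => ?_
      rw [← Finset.mul_sum, hrow, mul_one]
    rw [h1, Fintype.sum_prod_type, ← Finset.sum_sub_distrib]
    refine Finset.sum_congr rfl fun i _ => ?_
    rw [← Finset.sum_sub_distrib]
    refine Finset.sum_congr rfl fun j _ => ?_
    simp only [hw]; ring
  rw [hL, ← hsum_wx, ge_iff_le]
  have : ∑ ij : d × d, w ij * (Real.log (p ij.1) - Real.log (q ij.2))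
      = -2 * ∑ ij : d × d, w ij • Real.log (x ij) := by
    rw [Finset.mul_sum]
    refine Finset.sum_congr rfl fun ij _ => ?_
    rw [hlogx ij]; simp only [smul_eq_mul]; ring
  rw [this]
  nlinarith [jensen]

theorem stmt3 {d : Type*} [Fintype d] [DecidableEq d] (ρ σ : Matrix d d ℂ)
    (hρ : ρ.PosDef) (hσ : σ.PosDef) (htρ : ρ.trace = 1) (htσ : σ.trace = 1) :
    relEnt ρ σ ≥ -2 * Real.log ((msqrt ρ * msqrt σ).trace.re) := by
  classical
  set U : Matrix d d ℂ := (hρ.1.eigenvectorUnitary : Matrix d d ℂ) with hUdef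
  set W : Matrix d d ℂ := (hσ.1.eigenvectorUnitary : Matrix d d ℂ) with hWdef
  set p : d → ℝ := hρ.1.eigenvalues with hpdef
  set q : d → ℝ := hσ.1.eigenvalues with hqdef
  set V : Matrix d d ℂ := star U * W with hVdef
  set c : d → d → ℝ := fun i j => Complex.normSq (V i j) with hcdef
  have hUU : star U * U = 1 := Matrix.mem_unitaryGroup_iff'.mp hρ.1.eigenvectorUnitary.2
  have hUU' : U * star U = 1 := Matrix.mem_unitaryGroup_iff.mp hρ.1.eigenvectorUnitary.2
  have hWW' : W * star W = 1 := Matrix.mem_unitaryGroup_iff.mp hσ.1.eigenvectorUnitary.2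
  have hstarV : star W * U = star V := by rw [hVdef, Matrix.star_mul, star_star]
  have hVV : V * star V = 1 := by
    rw [hVdef, Matrix.star_mul, star_star, Matrix.mul_assoc, ← Matrix.mul_assoc W, hWW',
      Matrix.one_mul, hUU]
  -- row sums of c
  have hrow : ∀ i, ∑ j, c i j = 1 := by
    intro i
    have h : (V * star V) i i = (1 : Matrix d d ℂ) i i := by rw [hVV]
    rw [Matrix.mul_apply, Matrix.one_apply_eq] at h
    have h2 : (((∑ j, c i j : ℝ)) : ℂ) = 1 := by
      rw [← h]
      push_cast
      refine Finset.sum_congr rfl fun j _ => ?_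
      rw [Matrix.star_apply, ← Complex.mul_conj]
      rfl
    exact_mod_cast h2
  have hc0 : ∀ i j, 0 ≤ c i j := fun i j => Complex.normSq_nonneg _
  have hp0 : ∀ i, 0 < p i := fun i => hρ.eigenvalues_pos i
  have hq0 : ∀ j, 0 < q j := fun j => hσ.eigenvalues_pos j
  -- sum of eigenvalues of ρ is 1
  have hps : ∑ i, p i = 1 := by
    have h : ρ.trace = ((∑ i, p i : ℝ) : ℂ) := by
      conv_lhs => rw [show ρ = U * diagonal (fun i => ((p i : ℝ) : ℂ)) * star U from hρ.1.spectral_theorem]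
      rw [Matrix.trace_mul_cycle, hUU, Matrix.one_mul, Matrix.trace_diagonal]
      push_cast
      rfl
    rw [htρ] at h
    exact_mod_cast h.symm
  -- generic conversion of conjugate pair to normSq
  have hconj : ∀ i j, (star U * W) i j * (star W * U) j i = ((c i j : ℝ) : ℂ) := by
    intro i j
    rw [hstarV, Matrix.star_apply, ← hVdef, ← Complex.mul_conj]
    rfl
  -- structured forms
  have hρeq : ρ = U * diagonal (fun i => ((p i : ℝ) : ℂ)) * star U := hρ.1.spectral_theorem
  have hσeq : σ = W * diagonal (fun j => ((q j : ℝ) : ℂ)) * star W := hσ.1.spectral_theorem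
  have hmlogρ : mlog ρ = U * diagonal (fun i => ((Real.log (p i) : ℝ) : ℂ)) * star U := by
    rw [mlog, dif_pos hρ.1]; rfl
  have hmlogσ : mlog σ = W * diagonal (fun j => ((Real.log (q j) : ℝ) : ℂ)) * star W := by
    rw [mlog, dif_pos hσ.1]; rfl
  have hsqρ : msqrt ρ = U * diagonal (fun i => ((Real.sqrt (p i) : ℝ) : ℂ)) * star U := by
    rw [msqrt, dif_pos hρ.posSemidef]; rfl
  have hsqσ : msqrt σ = W * diagonal (fun j => ((Real.sqrt (q j) : ℝ) : ℂ)) * star W := by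
    rw [msqrt, dif_pos hσ.posSemidef]; rfl
  -- trace of ρ * mlog σ
  have eρσ : (ρ * mlog σ).trace = ((∑ i, ∑ j, p i * Real.log (q j) * c i j : ℝ) : ℂ) := by
    rw [hmlogσ]
    conv_lhs => rw [hρeq]
    rw [trace_diag_conj]
    push_cast
    refine Finset.sum_congr rfl fun i _ => Finset.sum_congr rfl fun j _ => ?_
    rw [hconj i j]
  -- trace of ρ * mlog ρ
  have eρρ : (ρ * mlog ρ).trace = ((∑ i, p i * Real.log (p i) : ℝ) : ℂ) := by
    rw [hmlogρ]
    conv_lhs => rw [hρeq]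
    rw [trace_diag_conj, hUU]
    push_cast
    refine Finset.sum_congr rfl fun i _ => ?_
    rw [Finset.sum_eq_single i]
    · simp [Matrix.one_apply_eq]
    · intro j _ hji
      simp [Matrix.one_apply, Ne.symm hji, hji]
    · simp
  -- trace of msqrt ρ * msqrt σ
  have esq : (msqrt ρ * msqrt σ).trace = ((∑ i, ∑ j, Real.sqrt (p i) * Real.sqrt (q j) * c i j : ℝ) : ℂ) := by
    rw [hsqρ, hsqσ, trace_diag_conj]
    push_cast
    refine Finset.sum_congr rfl fun i _ => Finset.sum_congr rfl fun j _ => ?_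
    rw [hconj i j]
  have hrel : relEnt ρ σ
      = (∑ i, p i * Real.log (p i)) - ∑ i, ∑ j, p i * Real.log (q j) * c i j := by
    rw [relEnt, Matrix.mul_sub, Matrix.trace_sub, eρρ, eρσ, ← Complex.ofReal_sub,
      Complex.ofReal_re]
  have htr : (msqrt ρ * msqrt σ).trace.re
      = ∑ i, ∑ j, Real.sqrt (p i) * Real.sqrt (q j) * c i j := by
    rw [esq, Complex.ofReal_re]
  rw [hrel, htr]
  exact real_key p q c hp0 hq0 hc0 hrow hps
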